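/- Let B : ℝ → L(X) be a family of bounded linear operators with B(t+1) = B(t) for all t and t ↦ B(t)x continuous for each x ∈ X, let 𝓑 denote the bounded operator of multiplication by B(t) on BC(ℝ,X), and let f ∈ BC(ℝ,X). If (σ(𝓑) ∩ Γ) ∩ σ(f) = ∅, then the difference equation u(t) = B(t)u(t−1) + f(t) (t ∈ ℝ) has at most one solution u ∈ BC(ℝ,X) with σ(u) ⊂ σ(f). -/

import Mathlib

open MeasureTheory Complex Metric BoundedContinuousFunction

noncomputable section

/-- The space `L^∞(ℝ, X)` of (classes of) essentially bounded strongly measurable functions. -/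
abbrev Linf (X : Type*) [NormedAddCommGroup X] : Type _ := Lp X ⊤ (volume : Measure ℝ)

variable (X : Type*) [NormedAddCommGroup X] [NormedSpace ℂ X] [CompleteSpace X]

/-- The translation operator `S` on `L^∞(ℝ,X)`, `(S g)(t) = g (t + 1)`. -/
def transOp : Linf X →L[ℂ] Linf X :=
  (Lp.compMeasurePreservingₗᵢ ℂ (fun t : ℝ => t + 1)
    (measurePreserving_add_right volume 1)).toContinuousLinearMap

/-- The circular spectrum of `g ∈ L^∞(ℝ,X)`: the set of points `ξ₀` of the unit circle `Γ`
such that `λ ↦ R(λ,S) g` admits no analytic extension to any neighborhood of `ξ₀`. -/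
def circSpec (g : Linf X) : Set ℂ :=
  {ξ | ‖ξ‖ = 1 ∧ ¬∃ (U : Set ℂ) (F : ℂ → Linf X), IsOpen U ∧ ξ ∈ U ∧
    AnalyticOnNhd ℂ F U ∧ ∀ lam ∈ U, ‖lam‖ ≠ 1 → F lam = resolvent (transOp X) lam g}

/-- A bounded continuous function, viewed as an element of `L^∞(ℝ,X)`. -/
def bcToLinf (f : ℝ →ᵇ X) : Linf X :=
  (memLp_top_of_bound f.continuous.aestronglyMeasurable ‖f‖
    (Filter.Eventually.of_forall fun t => f.norm_coe_le_norm t)).toLp f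

/-- Restriction of a continuous linear operator to an invariant submodule. -/
def restrictCLM {E : Type*} [NormedAddCommGroup E] [NormedSpace ℂ E]
    (f : E →L[ℂ] E) (p : Submodule ℂ E) (h : ∀ x ∈ p, f x ∈ p) : p →L[ℂ] p where
  toFun x := ⟨f x, h x x.2⟩
  map_add' x y := by ext; simp
  map_smul' c x := by ext; simp
  cont := Continuous.subtype_mk (f.continuous.comp continuous_subtype_val) _

/-- The translation operator `S` on `BC(ℝ,X)`, `(S g)(t) = g (t + 1)`. -/
def transBC : (ℝ →ᵇ X) →L[ℂ] (ℝ →ᵇ X) :=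
  LinearMap.mkContinuous
    { toFun := fun g => g.compContinuous ⟨fun t => t + 1, by continuity⟩
      map_add' := fun g h => by ext t; simp
      map_smul' := fun c g => by ext t; simp }
    1 (fun g => by
      simpa using g.norm_compContinuous_le ⟨fun t => t + 1, by continuity⟩)

/-- The translation `S(τ)` on `BC(ℝ,X)`, `(S(τ) g)(t) = g (t + τ)`. -/
def translateBC (τ : ℝ) (g : ℝ →ᵇ X) : ℝ →ᵇ X :=
  g.compContinuous ⟨fun t => t + τ, by continuity⟩

/-- A 1-periodic strongly continuous evolutionary process on `X`. -/
structure EvolProcess (X : Type*) [NormedAddCommGroup X] [NormedSpace ℂ X] where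
  U : ℝ → ℝ → X →L[ℂ] X
  idem : ∀ t : ℝ, U t t = ContinuousLinearMap.id ℂ X
  comp : ∀ r s t : ℝ, r ≤ s → s ≤ t → (U t s).comp (U s r) = U t r
  strongCont : ∀ x : X, ContinuousOn (fun p : ℝ × ℝ => U p.1 p.2 x) {p : ℝ × ℝ | p.2 ≤ p.1}
  periodic : ∀ t s : ℝ, U (t + 1) (s + 1) = U t s
  bound : ∃ N ω : ℝ, 0 < N ∧ 0 < ω ∧ ∀ t s : ℝ, s ≤ t → ‖U t s‖ ≤ N * Real.exp (ω * (t - s))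

section Stmt10Aux
-- AUX
set_option linter.unusedSectionVars false
variable {X}

lemma transOp_ae (g : Linf X) : transOp X g =ᵐ[volume] fun t => g (t + 1) :=
  Lp.coeFn_compMeasurePreserving g _

def transOpInv : Linf X →L[ℂ] Linf X :=
  (Lp.compMeasurePreservingₗᵢ ℂ (fun t : ℝ => t + (-1))
    (measurePreserving_add_right volume (-1))).toContinuousLinearMap

lemma transOpInv_ae (g : Linf X) : transOpInv g =ᵐ[volume] fun t => g (t + (-1)) :=
  Lp.coeFn_compMeasurePreserving g _

lemma norm_transOp_apply (g : Linf X) : ‖transOp X g‖ = ‖g‖ :=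
  Lp.norm_compMeasurePreserving g _

lemma transOp_transOpInv (g : Linf X) : transOp X (transOpInv g) = g := by
  apply Lp.ext
  have h1 := transOp_ae (transOpInv g)
  have h2 := (measurePreserving_add_right (volume : Measure ℝ) 1).quasiMeasurePreserving.ae_eq_comp
    (transOpInv_ae g)
  refine h1.trans (h2.trans ?_)
  filter_upwards with t
  simp [Function.comp]

lemma transOpInv_transOp (g : Linf X) : transOpInv (transOp X g) = g := by
  apply Lp.ext
  have h1 := transOpInv_ae (transOp X g)
  have h2 := (measurePreserving_add_right (volume : Measure ℝ) (-1)).quasiMeasurePreserving.ae_eq_comp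
    (transOp_ae g)
  refine h1.trans (h2.trans ?_)
  filter_upwards with t
  simp [Function.comp]

def transUnit : (Linf X →L[ℂ] Linf X)ˣ where
  val := transOp X
  inv := transOpInv
  val_inv := ContinuousLinearMap.ext fun g => by
    rw [ContinuousLinearMap.mul_apply, ContinuousLinearMap.one_apply]; exact transOp_transOpInv g
  inv_val := ContinuousLinearMap.ext fun g => by
    rw [ContinuousLinearMap.mul_apply, ContinuousLinearMap.one_apply]; exact transOpInv_transOp g

lemma isUnit_alg_sub_transOp {lam : ℂ} (h : ‖lam‖ ≠ 1) :
    IsUnit (algebraMap ℂ (Linf X →L[ℂ] Linf X) lam - transOp X) := by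
  rcases h.lt_or_gt with hlt | hgt
  · have hS' : ‖(transOpInv : Linf X →L[ℂ] Linf X)‖ ≤ 1 :=
      LinearIsometry.norm_toContinuousLinearMap_le _
    have ht : ‖lam • (transOpInv : Linf X →L[ℂ] Linf X)‖ < 1 := by
      have hns := norm_smul lam (transOpInv : Linf X →L[ℂ] Linf X)
      rw [hns]
      calc ‖lam‖ * ‖(transOpInv : Linf X →L[ℂ] Linf X)‖ ≤ ‖lam‖ * 1 :=
            mul_le_mul_of_nonneg_left hS' (norm_nonneg _)
        _ < 1 := by simpa using hlt
    set u : (Linf X →L[ℂ] Linf X)ˣ := transUnit * Units.oneSub _ ht with hu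
    have hval : ((-u : (Linf X →L[ℂ] Linf X)ˣ) : Linf X →L[ℂ] Linf X)
        = algebraMap ℂ (Linf X →L[ℂ] Linf X) lam - transOp X := by
      have : (u : Linf X →L[ℂ] Linf X) = transOp X - lam • 1 := by
        simp only [hu, Units.val_mul, Units.val_oneSub]
        have hval' : ((transUnit (X := X) : (Linf X →L[ℂ] Linf X)ˣ) : Linf X →L[ℂ] Linf X)
            = transOp X := rfl
        rw [hval', mul_sub, mul_one, mul_smul_comm]
        congr 1
        ext g
        simp only [ContinuousLinearMap.smul_apply, ContinuousLinearMap.mul_apply,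
          ContinuousLinearMap.one_apply]
        rw [transOp_transOpInv]
      rw [Units.val_neg, this, Algebra.algebraMap_eq_smul_one]
      abel
    exact hval ▸ (-u).isUnit
  · have hS : ‖(transOp X : Linf X →L[ℂ] Linf X)‖ ≤ 1 :=
      LinearIsometry.norm_toContinuousLinearMap_le _
    have h1 : ‖(1 : Linf X →L[ℂ] Linf X)‖ ≤ 1 := ContinuousLinearMap.norm_id_le
    exact spectrum.mem_resolventSet_of_norm_lt_mul
      (lt_of_le_of_lt (by nlinarith [norm_nonneg (transOp X), norm_nonneg (1 : Linf X →L[ℂ] Linf X)]) hgt)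

lemma alg_sub_apply {E : Type*} [NormedAddCommGroup E] [NormedSpace ℂ E]
    (lam : ℂ) (a : E →L[ℂ] E) (g : E) :
    (algebraMap ℂ (E →L[ℂ] E) lam - a) g = lam • g - a g := by
  rw [ContinuousLinearMap.sub_apply, Algebra.algebraMap_eq_smul_one,
    ContinuousLinearMap.smul_apply, ContinuousLinearMap.one_apply]

lemma resolvent_eq_unit {A : Type*} [Ring A] [Algebra ℂ A] {lam : ℂ} {a : A}
    (h : IsUnit (algebraMap ℂ A lam - a)) :
    resolvent a lam = ↑h.unit⁻¹ := by
  have h1 := Ring.inverse_unit h.unit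
  rwa [h.unit_spec] at h1

lemma sub_apply_resolvent {E : Type*} [NormedAddCommGroup E] [NormedSpace ℂ E]
    {lam : ℂ} {a : E →L[ℂ] E}
    (h : IsUnit (algebraMap ℂ (E →L[ℂ] E) lam - a)) (g : E) :
    (algebraMap ℂ (E →L[ℂ] E) lam - a) (resolvent a lam g) = g := by
  have h1 := h.unit.mul_inv
  rw [h.unit_spec] at h1
  rw [resolvent_eq_unit h, ← ContinuousLinearMap.mul_apply, h1, ContinuousLinearMap.one_apply]

lemma resolvent_apply_sub {E : Type*} [NormedAddCommGroup E] [NormedSpace ℂ E]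
    {lam : ℂ} {a : E →L[ℂ] E}
    (h : IsUnit (algebraMap ℂ (E →L[ℂ] E) lam - a)) (g : E) :
    resolvent a lam ((algebraMap ℂ (E →L[ℂ] E) lam - a) g) = g := by
  have h1 := h.unit.inv_mul
  rw [h.unit_spec] at h1
  rw [resolvent_eq_unit h, ← ContinuousLinearMap.mul_apply, h1, ContinuousLinearMap.one_apply]

lemma norm_resolvent_transOp {lam : ℂ} (h1 : 1 < ‖lam‖) (g : Linf X) :
    (‖lam‖ - 1) * ‖resolvent (transOp X) lam g‖ ≤ ‖g‖ := by
  have hU := isUnit_alg_sub_transOp (X := X) (ne_of_gt h1)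
  set y := resolvent (transOp X) lam g with hy
  have hg : lam • y - transOp X y = g := by
    rw [← alg_sub_apply]; exact sub_apply_resolvent hU g
  have hkey : ‖lam‖ * ‖y‖ ≤ ‖g‖ + ‖y‖ := by
    have h2 : lam • y = g + transOp X y := by rw [← hg]; abel
    calc ‖lam‖ * ‖y‖ = ‖lam • y‖ := (norm_smul _ _).symm
      _ = ‖g + transOp X y‖ := by rw [h2]
      _ ≤ ‖g‖ + ‖transOp X y‖ := norm_add_le _ _
      _ = ‖g‖ + ‖y‖ := by rw [norm_transOp_apply]
  nlinarith [norm_nonneg y]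

lemma agree_at {H F₁ F₂ : ℂ → Linf X} {W₁ W₂ : Set ℂ} (h₁ : IsOpen W₁) (h₂ : IsOpen W₂)
    (hc₁ : ContinuousOn F₁ W₁) (hc₂ : ContinuousOn F₂ W₂)
    (he₁ : ∀ lam ∈ W₁, ‖lam‖ ≠ 1 → F₁ lam = H lam)
    (he₂ : ∀ lam ∈ W₂, ‖lam‖ ≠ 1 → F₂ lam = H lam)
    {z : ℂ} (hz₁ : z ∈ W₁) (hz₂ : z ∈ W₂) : F₁ z = F₂ z := by
  by_cases hz : ‖z‖ = 1
  · set seq : ℕ → ℂ := fun n => ((1 + ((n : ℝ) + 1)⁻¹ : ℝ) : ℂ) * z with hseq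
    have hnorm : ∀ n, ‖seq n‖ ≠ 1 := by
      intro n
      have hpos : (0:ℝ) < ((n:ℝ)+1)⁻¹ := by positivity
      simp only [hseq, norm_mul, hz, mul_one, Complex.norm_real, Real.norm_eq_abs]
      rw [abs_of_pos (by linarith)]
      intro hcon; linarith
    have htend : Filter.Tendsto seq Filter.atTop (nhds z) := by
      have h0 : Filter.Tendsto (fun n : ℕ => ((n:ℝ)+1)⁻¹) Filter.atTop (nhds 0) := by
        simpa [one_div] using tendsto_one_div_add_atTop_nhds_zero_nat (𝕜 := ℝ)
      have hr : Filter.Tendsto (fun n : ℕ => (1 + ((n:ℝ)+1)⁻¹ : ℝ)) Filter.atTop (nhds 1) := by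
        simpa using (tendsto_const_nhds.add h0)
      have := ((Complex.continuous_ofReal.tendsto 1).comp hr).mul_const z
      simpa [hseq] using this
    have hev : ∀ᶠ n in Filter.atTop, F₁ (seq n) = F₂ (seq n) := by
      filter_upwards [htend.eventually_mem (h₁.mem_nhds hz₁),
        htend.eventually_mem (h₂.mem_nhds hz₂)] with n hn1 hn2
      rw [he₁ _ hn1 (hnorm n), he₂ _ hn2 (hnorm n)]
    have ht1 : Filter.Tendsto (fun n => F₁ (seq n)) Filter.atTop (nhds (F₁ z)) :=
      ((hc₁.continuousAt (h₁.mem_nhds hz₁)).tendsto).comp htend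
    have ht2 : Filter.Tendsto (fun n => F₂ (seq n)) Filter.atTop (nhds (F₂ z)) :=
      ((hc₂.continuousAt (h₂.mem_nhds hz₂)).tendsto).comp htend
    exact tendsto_nhds_unique (ht1.congr' hev) ht2
  · rw [he₁ z hz₁ hz, he₂ z hz₂ hz]

lemma eq_zero_of_circSpec_empty (g : Linf X) (h : circSpec X g = ∅) : g = 0 := by
  classical
  have hext : ∀ ξ : ℂ, ‖ξ‖ = 1 → ∃ (U : Set ℂ) (F : ℂ → Linf X), IsOpen U ∧ ξ ∈ U ∧
      AnalyticOnNhd ℂ F U ∧ ∀ lam ∈ U, ‖lam‖ ≠ 1 → F lam = resolvent (transOp X) lam g := by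
    intro ξ hξ
    by_contra hc
    have hmem : ξ ∈ circSpec X g := ⟨hξ, hc⟩
    rw [h] at hmem
    exact hmem
  choose! U F hUo hmem hFa hFe using hext
  set G : ℂ → Linf X := fun lam => if hl : ‖lam‖ = 1 then F lam lam
    else resolvent (transOp X) lam g with hG
  have hagree : ∀ ξ, ‖ξ‖ = 1 → ∀ lam ∈ U ξ, G lam = F ξ lam := by
    intro ξ hξ lam hlam
    by_cases hl : ‖lam‖ = 1
    · simp only [hG, dif_pos hl]
      exact agree_at (hUo lam hl) (hUo ξ hξ) (hFa lam hl).continuousOn (hFa ξ hξ).continuousOn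
        (hFe lam hl) (hFe ξ hξ) (hmem lam hl) hlam
    · simp only [hG, dif_neg hl]
      exact (hFe ξ hξ lam hlam hl).symm
  have hopen : IsOpen {lam : ℂ | ‖lam‖ ≠ 1} :=
    isOpen_compl_singleton.preimage continuous_norm
  have hdiff : Differentiable ℂ G := by
    intro z
    by_cases hz : ‖z‖ = 1
    · have hev : G =ᶠ[nhds z] F z :=
        Filter.eventuallyEq_of_mem ((hUo z hz).mem_nhds (hmem z hz)) (hagree z hz)
      exact (hev.differentiableAt_iff).mpr (hFa z hz z (hmem z hz)).differentiableAt
    · have hev : G =ᶠ[nhds z] fun lam => resolvent (transOp X) lam g :=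
        Filter.eventuallyEq_of_mem (hopen.mem_nhds hz) (fun lam hlam => by
          simp only [hG]
          rw [dif_neg (hlam : ‖lam‖ ≠ 1)])
      have hz' : z ∈ resolventSet ℂ (transOp X) := isUnit_alg_sub_transOp hz
      have hd : HasDerivAt (fun lam => resolvent (transOp X) lam g) _ z :=
        (spectrum.hasDerivAt_resolvent hz').clm_apply (hasDerivAt_const _ g)
      exact (hev.differentiableAt_iff).mpr hd.differentiableAt
  obtain ⟨C, hC⟩ := (isCompact_closedBall (0:ℂ) 2).exists_bound_of_continuousOn
    hdiff.continuous.continuousOn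
  have hbdd : Bornology.IsBounded (Set.range G) := by
    rw [isBounded_iff_forall_norm_le]
    refine ⟨max C ‖g‖, ?_⟩
    rintro _ ⟨lam, rfl⟩
    by_cases hl : ‖lam‖ ≤ 2
    · exact le_max_of_le_left (hC lam (mem_closedBall_zero_iff.mpr hl))
    · push_neg at hl
      have h1 : (1:ℝ) < ‖lam‖ := by linarith
      have hne : ‖lam‖ ≠ 1 := by intro hcon; rw [hcon] at hl; linarith
      have hGl : G lam = resolvent (transOp X) lam g := by
        simp only [hG]; rw [dif_neg hne]
      have := norm_resolvent_transOp h1 g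
      rw [← hGl] at this
      refine le_max_of_le_right ?_
      nlinarith [norm_nonneg (G lam)]
  have hconst : ∀ lam : ℂ, G lam = G 2 := fun lam =>
    hdiff.apply_eq_apply_of_bounded hbdd lam 2
  have h2 : ‖(2:ℂ)‖ ≠ 1 := by rw [RCLike.norm_two]; norm_num
  have hzero : G 2 = 0 := by
    by_contra h0
    have hG2pos : 0 < ‖G 2‖ := norm_pos_iff.mpr h0
    obtain ⟨n, hn⟩ := exists_nat_gt (‖g‖ / ‖G 2‖ + 2)
    have hnn : ‖((n:ℂ))‖ = (n:ℝ) := by rw [RCLike.norm_natCast]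
    have hdiv : (0:ℝ) ≤ ‖g‖ / ‖G 2‖ := div_nonneg (norm_nonneg _) (norm_nonneg _)
    have hne : ‖((n:ℂ))‖ ≠ 1 := by rw [hnn]; intro hcon; rw [hcon] at hn; norm_num at hn; linarith
    have hGn : G (n:ℂ) = resolvent (transOp X) (n:ℂ) g := by
      simp only [hG]; rw [dif_neg hne]
    have hkey := norm_resolvent_transOp (by rw [hnn]; linarith : 1 < ‖((n:ℂ))‖) g
    rw [← hGn] at hkey
    rw [hconst (n:ℂ), hnn] at hkey
    have hdm : ‖g‖ / ‖G 2‖ * ‖G 2‖ = ‖g‖ := div_mul_cancel₀ _ (ne_of_gt hG2pos)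
    nlinarith
  have hU := isUnit_alg_sub_transOp (X := X) h2
  have hres : resolvent (transOp X) (2:ℂ) g = 0 := by
    have := hzero
    simp only [hG] at this
    rwa [dif_neg h2] at this
  have hfin : g = (algebraMap ℂ (Linf X →L[ℂ] Linf X) 2 - transOp X)
      (resolvent (transOp X) (2:ℂ) g) := (sub_apply_resolvent hU g).symm
  rw [hres, map_zero] at hfin
  exact hfin

lemma exists_ext_of_not_mem {g : Linf X} {ξ : ℂ} (hξ : ‖ξ‖ = 1) (h : ξ ∉ circSpec X g) :
    ∃ (U : Set ℂ) (F : ℂ → Linf X), IsOpen U ∧ ξ ∈ U ∧ AnalyticOnNhd ℂ F U ∧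
      ∀ lam ∈ U, ‖lam‖ ≠ 1 → F lam = resolvent (transOp X) lam g := by
  by_contra hc
  exact h ⟨hξ, hc⟩

lemma circSpec_sub_subset (g h : Linf X) :
    circSpec X (g - h) ⊆ circSpec X g ∪ circSpec X h := by
  intro ξ hξ
  by_contra hc
  rw [Set.mem_union] at hc
  push_neg at hc
  obtain ⟨U₁, F₁, hU₁, hm₁, ha₁, he₁⟩ := exists_ext_of_not_mem hξ.1 hc.1
  obtain ⟨U₂, F₂, hU₂, hm₂, ha₂, he₂⟩ := exists_ext_of_not_mem hξ.1 hc.2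
  refine hξ.2 ⟨U₁ ∩ U₂, F₁ - F₂, hU₁.inter hU₂, ⟨hm₁, hm₂⟩,
    (ha₁.mono Set.inter_subset_left).sub (ha₂.mono Set.inter_subset_right),
    fun lam hlam hne => ?_⟩
  simp only [Pi.sub_apply, he₁ lam hlam.1 hne, he₂ lam hlam.2 hne, map_sub]

lemma bcToLinf_ae (k : ℝ →ᵇ X) : bcToLinf X k =ᵐ[volume] ⇑k := MemLp.coeFn_toLp _

lemma bcToLinf_sub (k l : ℝ →ᵇ X) :
    bcToLinf X (k - l) = bcToLinf X k - bcToLinf X l := by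
  apply Lp.ext
  refine (bcToLinf_ae _).trans (.trans ?_ (Lp.coeFn_sub _ _).symm)
  have hcoe : ⇑(k - l) = ⇑k - ⇑l := by ext t; simp
  rw [hcoe]
  exact ((bcToLinf_ae k).sub (bcToLinf_ae l)).symm

lemma bcToLinf_add (k l : ℝ →ᵇ X) :
    bcToLinf X (k + l) = bcToLinf X k + bcToLinf X l := by
  apply Lp.ext
  refine (bcToLinf_ae _).trans (.trans ?_ (Lp.coeFn_add _ _).symm)
  have hcoe : ⇑(k + l) = ⇑k + ⇑l := by ext t; simp
  rw [hcoe]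
  exact ((bcToLinf_ae k).add (bcToLinf_ae l)).symm

lemma bcToLinf_smul (c : ℂ) (k : ℝ →ᵇ X) :
    bcToLinf X (c • k) = c • bcToLinf X k := by
  apply Lp.ext
  refine (bcToLinf_ae _).trans (.trans ?_ (Lp.coeFn_smul _ _).symm)
  have hcoe : ⇑(c • k) = c • ⇑k := by ext t; simp
  rw [hcoe]
  exact ((bcToLinf_ae k).const_smul c).symm

lemma norm_bcToLinf_le (k : ℝ →ᵇ X) : ‖bcToLinf X k‖ ≤ ‖k‖ := by
  have h := Lp.norm_toLp (μ := (volume : Measure ℝ)) (p := ⊤) ⇑k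
    (memLp_top_of_bound k.continuous.aestronglyMeasurable ‖k‖
      (Filter.Eventually.of_forall fun t => k.norm_coe_le_norm t))
  rw [bcToLinf, h, eLpNorm_exponent_top]
  exact ENNReal.toReal_le_of_le_ofReal (norm_nonneg k)
    (eLpNormEssSup_le_of_ae_bound (Filter.Eventually.of_forall fun t => k.norm_coe_le_norm t))

def bcCLM : (ℝ →ᵇ X) →L[ℂ] Linf X :=
  LinearMap.mkContinuous
    { toFun := bcToLinf X
      map_add' := bcToLinf_add
      map_smul' := bcToLinf_smul }
    1 (fun k => by rw [one_mul]; exact norm_bcToLinf_le k)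

lemma bcCLM_apply (k : ℝ →ᵇ X) : bcCLM k = bcToLinf X k := rfl

lemma bc_eq_zero {k : ℝ →ᵇ X} (h : bcToLinf X k = 0) : k = 0 := by
  have h2 := (bcToLinf_ae k).symm
  rw [h] at h2
  have h1 : ⇑k =ᵐ[volume] (fun _ => (0 : X)) :=
    h2.trans (Lp.coeFn_zero X ⊤ volume)
  have h3 := (Continuous.ae_eq_iff_eq volume k.continuous continuous_const).mp h1
  ext t
  exact congrFun h3 t

lemma bcToLinf_transBC (k : ℝ →ᵇ X) :
    bcToLinf X (transBC X k) = transOp X (bcToLinf X k) := by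
  apply Lp.ext
  have h1 := bcToLinf_ae (transBC X k)
  have h2 := transOp_ae (bcToLinf X k)
  have h3 := (measurePreserving_add_right (volume : Measure ℝ) 1).quasiMeasurePreserving.ae_eq_comp
    (bcToLinf_ae k)
  refine h1.trans (Filter.EventuallyEq.trans ?_ (h2.trans h3).symm)
  exact Filter.Eventually.of_forall fun t => rfl

lemma not_mem_circSpec_homog {𝓑 : (ℝ →ᵇ X) →L[ℂ] (ℝ →ᵇ X)} {w : ℝ →ᵇ X}
    (hSw : transBC X w = 𝓑 w)
    (hcomm : Commute (transBC X) 𝓑)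
    {ξ : ℂ} (hξ : ξ ∉ spectrum ℂ 𝓑) :
    ξ ∉ circSpec X (bcToLinf X w) := by
  rintro ⟨-, hno⟩
  apply hno
  have hUopen := spectrum.isOpen_resolventSet (𝕜 := ℂ) 𝓑
  refine ⟨resolventSet ℂ 𝓑, fun lam => bcToLinf X (resolvent 𝓑 lam w),
    hUopen, spectrum.notMem_iff.mp hξ, ?_, ?_⟩
  · refine DifferentiableOn.analyticOnNhd (fun z hz => ?_) hUopen
    have hd : HasDerivAt (fun lam => resolvent 𝓑 lam w) _ z :=
      (spectrum.hasDerivAt_resolvent hz).clm_apply (hasDerivAt_const _ w)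
    exact (bcCLM.hasFDerivAt.comp_hasDerivAt z hd).differentiableAt.differentiableWithinAt
  · intro lam hlam hne
    set y := resolvent 𝓑 lam w with hy
    have hUB : IsUnit (algebraMap ℂ ((ℝ →ᵇ X) →L[ℂ] (ℝ →ᵇ X)) lam - 𝓑) :=
      spectrum.mem_resolventSet_iff.mp hlam
    have hc1 : Commute (transBC X) (↑hUB.unit : (ℝ →ᵇ X) →L[ℂ] (ℝ →ᵇ X)) := by
      rw [hUB.unit_spec]
      exact (Algebra.commute_algebraMap_right lam (transBC X)).sub_right hcomm
    have hcomm2 : Commute (transBC X) (resolvent 𝓑 lam) := by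
      rw [resolvent_eq_unit hUB]
      exact hc1.units_inv_right
    have hc1' : Commute 𝓑 (↑hUB.unit : (ℝ →ᵇ X) →L[ℂ] (ℝ →ᵇ X)) := by
      rw [hUB.unit_spec]
      exact (Algebra.commute_algebraMap_right lam 𝓑).sub_right (Commute.refl 𝓑)
    have hcommB : Commute 𝓑 (resolvent 𝓑 lam) := by
      rw [resolvent_eq_unit hUB]
      exact hc1'.units_inv_right
    have hstep1 : lam • y - 𝓑 y = w := by
      rw [← alg_sub_apply]
      exact sub_apply_resolvent hUB w
    have hstep2 : transBC X y = 𝓑 y := by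
      calc transBC X y = (transBC X * resolvent 𝓑 lam) w := rfl
        _ = (resolvent 𝓑 lam * transBC X) w := by rw [hcomm2.eq]
        _ = resolvent 𝓑 lam (𝓑 w) := by rw [ContinuousLinearMap.mul_apply, hSw]
        _ = (𝓑 * resolvent 𝓑 lam) w := by
            rw [← ContinuousLinearMap.mul_apply, hcommB.eq]
        _ = 𝓑 y := rfl
    have hstep3 : lam • y - transBC X y = w := by rw [hstep2]; exact hstep1
    have hstep4 : (algebraMap ℂ (Linf X →L[ℂ] Linf X) lam - transOp X)
        (bcToLinf X y) = bcToLinf X w := by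
      rw [alg_sub_apply, ← bcToLinf_transBC, ← bcToLinf_smul, ← bcToLinf_sub, hstep3]
    have hUS := isUnit_alg_sub_transOp (X := X) hne
    have hstep5 : resolvent (transOp X) lam (bcToLinf X w) = bcToLinf X y := by
      rw [← hstep4]
      exact resolvent_apply_sub hUS _
    exact hstep5.symm

end Stmt10Aux

/-- if `(σ(𝓑) ∩ Γ) ∩ σ(f) = ∅`, then the difference equation
`u(t) = B(t) u(t-1) + f(t)` has at most one solution `u ∈ BC(ℝ,X)` with `σ(u) ⊆ σ(f)`. -/
theorem stmt10 (B : ℝ → X →L[ℂ] X) (hBper : ∀ t : ℝ, B (t + 1) = B t)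
    (hBcont : ∀ x : X, Continuous fun t : ℝ => B t x)
    (𝓑 : (ℝ →ᵇ X) →L[ℂ] (ℝ →ᵇ X)) (h𝓑 : ∀ (g : ℝ →ᵇ X) (t : ℝ), 𝓑 g t = B t (g t))
    (f : ℝ →ᵇ X)
    (hsep : (spectrum ℂ 𝓑 ∩ Metric.sphere (0 : ℂ) 1) ∩ circSpec X (bcToLinf X f) = ∅)
    (u v : ℝ →ᵇ X)
    (hu : ∀ t : ℝ, u t = B t (u (t - 1)) + f t)
    (hv : ∀ t : ℝ, v t = B t (v (t - 1)) + f t)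
    (huspec : circSpec X (bcToLinf X u) ⊆ circSpec X (bcToLinf X f))
    (hvspec : circSpec X (bcToLinf X v) ⊆ circSpec X (bcToLinf X f)) :
    u = v := by
  have hcomm : Commute (transBC X) 𝓑 := by
    apply ContinuousLinearMap.ext
    intro g
    apply BoundedContinuousFunction.ext
    intro t
    have h1 : (transBC X * 𝓑) g t = B (t + 1) (g (t + 1)) := by
      rw [ContinuousLinearMap.mul_apply]
      have hc : transBC X (𝓑 g) t = (𝓑 g) (t + 1) := rfl
      rw [hc, h𝓑]
    have h2 : (𝓑 * transBC X) g t = B t (g (t + 1)) := by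
      rw [ContinuousLinearMap.mul_apply, h𝓑]
      rfl
    rw [h1, h2, hBper]
  set w := u - v with hwdef
  have hw : ∀ t : ℝ, w t = B t (w (t - 1)) := by
    intro t
    have hc : w t = u t - v t := rfl
    have hc' : w (t - 1) = u (t - 1) - v (t - 1) := rfl
    rw [hc, hu t, hv t, hc', (B t).map_sub, add_sub_add_right_eq_sub]
  have hSw : transBC X w = 𝓑 w := by
    apply BoundedContinuousFunction.ext
    intro t
    have h1 : transBC X w t = w (t + 1) := rfl
    rw [h1, hw (t + 1), h𝓑, hBper]
    have ht : t + 1 - 1 = t := by ring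
    rw [ht]
  have hWspec : circSpec X (bcToLinf X w) = ∅ := by
    ext ξ
    simp only [Set.mem_empty_iff_false, iff_false]
    intro hmem
    have hf : ξ ∈ circSpec X (bcToLinf X f) := by
      have hsub : bcToLinf X w = bcToLinf X u - bcToLinf X v := bcToLinf_sub u v
      rw [hsub] at hmem
      rcases circSpec_sub_subset _ _ hmem with h | h
      exacts [huspec h, hvspec h]
    have hB : ξ ∈ spectrum ℂ 𝓑 := by
      by_contra hB
      exact not_mem_circSpec_homog hSw hcomm hB hmem
    have hfin : ξ ∈ (spectrum ℂ 𝓑 ∩ Metric.sphere (0 : ℂ) 1) ∩ circSpec X (bcToLinf X f) :=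
      ⟨⟨hB, by simpa [mem_sphere_zero_iff_norm] using hmem.1⟩, hf⟩
    rw [hsep] at hfin
    exact hfin
  have hw0 : bcToLinf X w = 0 := eq_zero_of_circSpec_empty _ hWspec
  have hzero : u - v = 0 := bc_eq_zero hw0
  exact sub_eq_zero.mp hzero

end
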